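/- arXiv:1110.3523 — 3 statements merged into one kernel-verified Lean document; each statement's English description precedes it below -/
import Mathlib

section
/- Let k be a field of characteristic zero and let Φ be an irreducible root system in a finite-dimensional k-vector space M with dim M ≥ 2. Then for every root β ∈ Φ, the set of roots Φ \ {β, −β} spans M. -/
/-- A root pairing is irreducible if the weight space is nonzero and has no proper nonzero
submodule that is invariant under all the reflections associated to roots. -/
def RootPairing.IsIrred {ι R M N : Type*} [CommRing R] [AddCommGroup M] [Module R M]
    [AddCommGroup N] [Module R N] (P : RootPairing ι R M N) : Prop :=
  Nontrivial M ∧ ∀ q : Submodule R M,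
    (∀ i : ι, q.map (P.reflection i : M →ₗ[R] M) ≤ q) → q ≠ ⊥ → q = ⊤

/-- A root system is a root pairing whose roots span the weight space (the definition of
`RootSystem` in the older Mathlib, which has since been removed). -/
structure RootSystem (ι R M N : Type*) [CommRing R] [AddCommGroup M] [Module R M]
    [AddCommGroup N] [Module R N] extends RootPairing ι R M N where
  span_eq_top : Submodule.span R (Set.range root) = ⊤

/-- For an irreducible root system in a space of dimension at least `2` over a field of
characteristic zero, removing a pair of roots `±β` still leaves a spanning set of roots. -/
theorem span_roots_erase_pair_eq_top {ι k M N : Type*} [Field k] [CharZero k]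
    [AddCommGroup M] [Module k M] [AddCommGroup N] [Module k N] [FiniteDimensional k M]
    (P : RootSystem ι k M N) (hirr : P.toRootPairing.IsIrred)
    (hdim : 2 ≤ Module.finrank k M) (b : ι) :
    Submodule.span k {α : M | α ∈ Set.range P.root ∧ α ≠ P.root b ∧ α ≠ -P.root b} = ⊤ := by
  classical
  obtain ⟨_, hM⟩ := hirr
  set S : Set M := {α : M | α ∈ Set.range P.root ∧ α ≠ P.root b ∧ α ≠ -P.root b} with hS
  -- `S` is nonempty: otherwise all roots lie in a line, contradicting `finrank ≥ 2`.
  have hex : ∃ j : ι, P.root j ∈ S := by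
    by_contra h
    push_neg at h
    have hsub : Set.range P.root ⊆ ({P.root b, -P.root b} : Set M) := by
      rintro - ⟨j, rfl⟩
      by_contra hj
      simp only [Set.mem_insert_iff, Set.mem_singleton_iff, not_or] at hj
      exact h j ⟨Set.mem_range_self j, hj.1, hj.2⟩
    have h1 : (⊤ : Submodule k M) ≤ Submodule.span k ({P.root b, -P.root b} : Set M) := by
      rw [← P.span_eq_top]; exact Submodule.span_mono hsub
    have h2 : Submodule.span k ({P.root b, -P.root b} : Set M) ≤ Submodule.span k {P.root b} := by
      rw [Submodule.span_le]
      rintro x (rfl | rfl)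
      · exact Submodule.mem_span_singleton_self _
      · exact Submodule.neg_mem _ (Submodule.mem_span_singleton_self _)
    have htop : Submodule.span k ({P.root b} : Set M) = ⊤ :=
      top_le_iff.mp (h1.trans h2)
    have h3 : Module.finrank k M = 1 := by
      have := finrank_span_singleton (K := k) (P.ne_zero b)
      rw [htop, finrank_top] at this
      exact this
    omega
  apply hM
  · intro i
    rw [Submodule.map_span, Submodule.span_le]
    rintro - ⟨γ, hγ, rfl⟩
    obtain ⟨⟨j, rfl⟩, h1, h2⟩ := hγ
    simp only [LinearEquiv.coe_coe]
    by_cases hib : P.root i = P.root b ∨ P.root i = -P.root b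
    · have hrefl : ∀ x, P.reflection i x = P.reflection b x := by
        rcases hib with h | h
        · have : i = b := P.root.injective h
          subst this; intro x; rfl
        · have hi : i = P.reflectionPerm b b := by
            apply P.root.injective
            rw [RootPairing.root_reflectionPerm, RootPairing.reflection_apply_self, h]
          subst hi
          intro x
          rw [RootPairing.reflection_apply, RootPairing.reflection_apply]
          have hc : P.coroot (P.reflectionPerm b b) = -P.coroot b := by
            rw [RootPairing.coroot_reflectionPerm, RootPairing.coreflection_apply_self]
          have hr : P.root (P.reflectionPerm b b) = -P.root b := by
            rw [RootPairing.root_reflectionPerm, RootPairing.reflection_apply_self]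
          simp only [RootPairing.coroot', hc, hr, map_neg, LinearMap.neg_apply, neg_smul,
            smul_neg, neg_neg]
      rw [hrefl]
      apply Submodule.subset_span
      refine ⟨P.mapsTo_reflection_root b ⟨j, rfl⟩, ?_, ?_⟩
      · intro h
        apply h2
        have := congrArg (P.reflection b) h
        rw [RootPairing.reflection_same, RootPairing.reflection_apply_self] at this
        exact this
      · intro h
        apply h1
        have := congrArg (P.reflection b) h
        rw [RootPairing.reflection_same, map_neg, RootPairing.reflection_apply_self,
          neg_neg] at this
        exact this
    · push_neg at hib
      rw [RootPairing.reflection_apply_root]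
      exact Submodule.sub_mem _ (Submodule.subset_span ⟨⟨j, rfl⟩, h1, h2⟩)
        (Submodule.smul_mem _ _ (Submodule.subset_span ⟨⟨i, rfl⟩, hib.1, hib.2⟩))
  · obtain ⟨j, hj⟩ := hex
    intro hbot
    exact P.ne_zero j ((Submodule.span_eq_bot.mp hbot) _ hj)
end

section
/- Let k be a field of characteristic zero and let Φ be an irreducible root system in a finite-dimensional k-vector space M with dim M ≥ 2, with coweight space N and perfect pairing ⟨·,·⟩ : M × N → k. Fix a root β ∈ Φ. If x ∈ N satisfies ⟨α, x⟩ = 0 for every root α ∈ Φ with α ≠ β and α ≠ −β, then x = 0. -/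
/-- In an irreducible root system of rank at least `2` over a field of characteristic zero, an
element of the coweight space on which all roots except possibly the pair `±β` vanish is zero. -/
theorem eq_zero_of_forall_root_ne_pair_apply_eq_zero {ι k M N : Type*} [Field k] [CharZero k]
    [AddCommGroup M] [Module k M] [AddCommGroup N] [Module k N] [FiniteDimensional k M]
    (P : RootSystem ι k M N) (hirr : P.toRootPairing.IsIrred)
    (hdim : 2 ≤ Module.finrank k M) (b : ι) (x : N)
    (hx : ∀ i : ι, P.root i ≠ P.root b → P.root i ≠ -P.root b →
      P.toLinearMap (P.root i) x = 0) :
    x = 0 := by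
  classical
  -- the linear functional `m ↦ ⟨m, x⟩`
  set f : M →ₗ[k] k := P.toLinearMap.flip x with hf
  have hfroot : ∀ i : ι, P.root i ≠ P.root b → P.root i ≠ -P.root b → f (P.root i) = 0 :=
    fun i h1 h2 => hx i h1 h2
  -- Step 1 : `⟨β, x⟩ = 0`.
  have key : f (P.root b) = 0 := by
    by_cases hmul : ∃ i : ι, (∃ t : k, P.root i = t • P.root b) ∧
        P.root i ≠ P.root b ∧ P.root i ≠ -P.root b
    · obtain ⟨i, ⟨t, hti⟩, h1, h2⟩ := hmul
      have h0 := hfroot i h1 h2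
      rw [hti, map_smul] at h0
      have ht : t ≠ 0 := by
        rintro rfl
        rw [zero_smul] at hti
        exact P.ne_zero i hti
      simpa [smul_eq_mul, ht] using h0
    · push_neg at hmul
      have hmul' : ∀ i : ι, ∀ t : k, P.root i = t • P.root b →
          P.root i = P.root b ∨ P.root i = -P.root b := by
        intro i t hti
        by_cases h1 : P.root i = P.root b
        · exact Or.inl h1
        · exact Or.inr (hmul i ⟨t, hti⟩ h1)
      -- the span of all roots other than `±β`
      set S : Set M := {m | (∃ i, P.root i = m) ∧ m ≠ P.root b ∧ m ≠ -P.root b} with hS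
      set q : Submodule k M := Submodule.span k S with hq
      have hSq : S ⊆ q := Submodule.subset_span
      -- invariance of `q` under all reflections
      have hinv : ∀ j : ι, q.map (P.reflection j : M →ₗ[k] M) ≤ q := by
        intro j
        rw [hq, Submodule.map_span, Submodule.span_le]
        rintro - ⟨m, ⟨⟨i, rfl⟩, h1, h2⟩, rfl⟩
        by_cases hj : P.root j = P.root b ∨ P.root j = -P.root b
        · -- reflection in `±β`: the image root cannot be `±β`
          have himg : (P.reflection j : M →ₗ[k] M) (P.root i) =
              P.root (P.reflectionPerm j i) := by
            exact (P.root_reflectionPerm j i).symm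
          rw [himg]
          have hformula : P.root (P.reflectionPerm j i) =
              P.root i - P.toLinearMap (P.root i) (P.coroot j) • P.root j :=
            (P.reflectionPerm_root j i).symm
          set c : k := P.toLinearMap (P.root i) (P.coroot j)
          have hne1 : P.root (P.reflectionPerm j i) ≠ P.root b := by
            intro hcon
            have : P.root i = P.root b + c • P.root j := by
              rw [← hcon, hformula]; abel
            rcases hj with hj | hj
            · rw [hj] at this
              have : P.root i = (1 + c) • P.root b := by
                rw [this, add_smul, one_smul]
              rcases hmul' i _ this with h | h
              · exact h1 h
              · exact h2 h
            · rw [hj] at this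
              have : P.root i = (1 - c) • P.root b := by
                rw [this, sub_smul, one_smul, smul_neg]; abel
              rcases hmul' i _ this with h | h
              · exact h1 h
              · exact h2 h
          have hne2 : P.root (P.reflectionPerm j i) ≠ -P.root b := by
            intro hcon
            have : P.root i = -P.root b + c • P.root j := by
              rw [← hcon, hformula]; abel
            rcases hj with hj | hj
            · rw [hj] at this
              have : P.root i = (-1 + c) • P.root b := by
                rw [this, add_smul, neg_one_smul]
              rcases hmul' i _ this with h | h
              · exact h1 h
              · exact h2 h
            · rw [hj] at this
              have : P.root i = (-1 - c) • P.root b := by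
                rw [this, sub_smul, neg_one_smul, smul_neg]; abel
              rcases hmul' i _ this with h | h
              · exact h1 h
              · exact h2 h
          exact hSq ⟨⟨_, rfl⟩, hne1, hne2⟩
        · -- reflection in a root ≠ ±β : stays in the span directly
          push_neg at hj
          have hji : P.root j ∈ q := hSq ⟨⟨j, rfl⟩, hj.1, hj.2⟩
          have hii : P.root i ∈ q := hSq ⟨⟨i, rfl⟩, h1, h2⟩
          have : (P.reflection j : M →ₗ[k] M) (P.root i) =
              P.root i - P.toLinearMap (P.root i) (P.coroot j) • P.root j := by
            simpa using P.reflection_apply j (P.root i)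
          rw [this]
          exact Submodule.sub_mem q hii (Submodule.smul_mem q _ hji)
      -- `q ≠ ⊥` : there is a root outside `±β` since the rank is at least 2
      have hex : ∃ i : ι, P.root i ≠ P.root b ∧ P.root i ≠ -P.root b := by
        by_contra hcon
        push_neg at hcon
        have hsub : ∀ i : ι, P.root i ∈ Submodule.span k ({P.root b} : Set M) := by
          intro i
          by_cases h1 : P.root i = P.root b
          · rw [h1]; exact Submodule.mem_span_singleton_self _
          · rw [hcon i h1]
            exact Submodule.neg_mem _ (Submodule.mem_span_singleton_self _)
        have htop : (⊤ : Submodule k M) ≤ Submodule.span k ({P.root b} : Set M) := by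
          rw [← P.span_eq_top]
          rw [Submodule.span_le]
          rintro - ⟨i, rfl⟩
          exact hsub i
        have h1 : Module.finrank k (Submodule.span k ({P.root b} : Set M)) = 1 :=
          finrank_span_singleton (P.ne_zero b)
        have h2 : Submodule.span k ({P.root b} : Set M) = ⊤ := le_antisymm le_top htop
        rw [h2, finrank_top] at h1
        omega
      have hqne : q ≠ ⊥ := by
        obtain ⟨i, h1, h2⟩ := hex
        intro hbot
        have : P.root i ∈ q := hSq ⟨⟨i, rfl⟩, h1, h2⟩
        rw [hbot, Submodule.mem_bot] at this
        exact P.ne_zero i this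
      have hqtop : q = ⊤ := hirr.2 q hinv hqne
      -- `f` vanishes on `q = ⊤`, hence on `β`
      have hfq : q ≤ LinearMap.ker f := by
        rw [hq, Submodule.span_le]
        rintro m ⟨⟨i, rfl⟩, h1, h2⟩
        exact hfroot i h1 h2
      have : P.root b ∈ LinearMap.ker f := hfq (hqtop ▸ Submodule.mem_top)
      exact this
  -- Step 2 : `f` vanishes on all roots, hence everywhere, hence `x = 0`.
  have hfall : ∀ i : ι, f (P.root i) = 0 := by
    intro i
    by_cases h1 : P.root i = P.root b
    · rw [h1]; exact key
    · by_cases h2 : P.root i = -P.root b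
      · rw [h2, map_neg, key, neg_zero]
      · exact hfroot i h1 h2
  have hfzero : f = 0 := by
    have : (⊤ : Submodule k M) ≤ LinearMap.ker f := by
      rw [← P.span_eq_top, Submodule.span_le]
      rintro - ⟨i, rfl⟩
      exact hfall i
    ext m
    exact this Submodule.mem_top
  have := (LinearMap.IsPerfPair.bijective_right P.toLinearMap).injective (a₁ := x) (a₂ := 0)
  simpa using this (by simpa using hfzero)
end

section
/- Let k be a commutative ring, R a commutative k-algebra, and S a commutative R-algebra (with compatible k-algebra structure) such that S is formally étale over R. Then for every k-derivation D : R → S (where S is an R-module via the algebra map), there exists a unique k-derivation D' : S → S such that D'(algebraMap R S r) = D(r) for all r ∈ R. -/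
universe u

open TrivSqZeroExt

section Aux

variable {k : Type*} {R S : Type u} [CommRing k] [CommRing R] [CommRing S]
  [Algebra k R] [Algebra k S] [Algebra R S] [IsScalarTower k R S]

/-- The "twisted" ring hom `R → S[ε]`, `r ↦ (algebraMap R S r, D r)`. -/
def Derivation.twistHom (D : Derivation k R S) : R →+* TrivSqZeroExt S S where
  toFun r := ⟨algebraMap R S r, D r⟩
  map_one' := by ext <;> simp
  map_mul' r s := by
    ext
    · change algebraMap R S (r * s) = algebraMap R S r * algebraMap R S s; simp
    · change D (r * s) = algebraMap R S r • D s + MulOpposite.op (algebraMap R S s) • D r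
      simp only [snd_mk, fst_mk, D.leibniz, op_smul_eq_smul, smul_eq_mul, Algebra.smul_def]
      try ring
  map_zero' := by ext <;> simp
  map_add' r s := by
    ext
    · change algebraMap R S (r + s) = algebraMap R S r + algebraMap R S s; simp
    · change D (r + s) = D r + D s; simp

omit [IsScalarTower k R S] in
@[simp] lemma Derivation.twistHom_fst (D : Derivation k R S) (r : R) :
    (D.twistHom r).fst = algebraMap R S r := rfl

omit [IsScalarTower k R S] in
@[simp] lemma Derivation.twistHom_snd (D : Derivation k R S) (r : R) :
    (D.twistHom r).snd = D r := rfl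

end Aux

/-- Derivations extend uniquely along formally étale algebras: if `S` is formally étale over `R`,
then every `k`-derivation `R → S` extends uniquely to a `k`-derivation `S → S`. -/
theorem existsUnique_derivation_extension_of_formallyEtale
    {k : Type*} {R S : Type u} [CommRing k] [CommRing R] [CommRing S]
    [Algebra k R] [Algebra k S] [Algebra R S] [IsScalarTower k R S]
    [Algebra.FormallyEtale R S] (D : Derivation k R S) :
    ∃! D' : Derivation k S S, ∀ r : R, D' (algebraMap R S r) = D r := by
  classical
  letI : Algebra R (TrivSqZeroExt S S) := D.twistHom.toAlgebra
  have halg : ∀ r : R, algebraMap R (TrivSqZeroExt S S) r = D.twistHom r := fun _ => rfl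
  -- the square-zero ideal of infinitesimals
  let I : Ideal (TrivSqZeroExt S S) :=
    RingHom.ker (TrivSqZeroExt.fstHom S S S).toRingHom
  have hmem : ∀ x : TrivSqZeroExt S S, x ∈ I ↔ x.fst = 0 := fun x => Iff.rfl
  have hI : I ^ 2 = ⊥ := by
    refine le_antisymm ?_ bot_le
    rw [pow_two]
    refine Ideal.mul_le.2 fun x hx y hy => ?_
    rw [hmem] at hx hy
    have hx' : x = inr x.snd := by ext <;> simp [hx]
    have hy' : y = inr y.snd := by ext <;> simp [hy]
    rw [Ideal.mem_bot, hx', hy', inr_mul_inr]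
  -- the map `S → S[ε]/I` to be lifted
  let f : S →ₐ[R] TrivSqZeroExt S S ⧸ I :=
  { (Ideal.Quotient.mk I).comp (inlHom S S) with
    commutes' := fun r => by
      show Ideal.Quotient.mk I (inl (algebraMap R S r)) = Ideal.Quotient.mk I (D.twistHom r)
      rw [Ideal.Quotient.mk_eq_mk_iff_sub_mem, hmem]
      simp }
  obtain ⟨hinj, hsurj⟩ :=
    (Algebra.FormallyEtale.comp_bijective (R := R) (A := S) I hI)
  obtain ⟨g, hg⟩ := hsurj f
  have hgf : ∀ s : S, (g s).fst = s := by
    intro s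
    have : Ideal.Quotient.mk I (g s) = Ideal.Quotient.mk I (inl s) :=
      congrArg (fun h : S →ₐ[R] TrivSqZeroExt S S ⧸ I => h s) hg
    rw [Ideal.Quotient.mk_eq_mk_iff_sub_mem, hmem] at this
    simpa [sub_eq_zero] using this
  have hgr : ∀ r : R, g (algebraMap R S r) = D.twistHom r := fun r =>
    (g.commutes r : _)
  -- the extended derivation
  let D' : Derivation k S S :=
  { toFun := fun s => (g s).snd
    map_add' := fun a b => by show (g (a + b)).snd = _; rw [map_add, snd_add]
    map_smul' := fun c s => by
      have h1 : (c : k) • s = algebraMap k S c * s := by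
        rw [Algebra.smul_def]
      have h2 : algebraMap k S c = algebraMap R S (algebraMap k R c) :=
        IsScalarTower.algebraMap_apply k R S c
      show (g (c • s)).snd = c • (g s).snd
      rw [h1, map_mul, h2, hgr, snd_mul]
      simp [Algebra.smul_def, ← h2]
    map_one_eq_zero' := by
      show (g 1).snd = 0
      rw [map_one]; rfl
    leibniz' := fun a b => by
      show (g (a * b)).snd = a • (g b).snd + b • (g a).snd
      rw [map_mul, snd_mul, hgf, hgf, op_smul_eq_smul] }
  have hD' : ∀ r : R, D' (algebraMap R S r) = D r := fun r => by
    show (g (algebraMap R S r)).snd = D r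
    rw [hgr]; rfl
  refine ⟨D', hD', fun D'' hD'' => ?_⟩
  -- uniqueness: build the alg hom corresponding to `D''` and use injectivity
  let g'' : S →ₐ[R] TrivSqZeroExt S S :=
  { toRingHom := D''.twistHom
    commutes' := fun r => by
      rw [halg r]
      ext
      · simp
      · simp [hD'' r] }
  have hcomp : (Ideal.Quotient.mkₐ R I).comp g'' = f := by
    ext s
    show Ideal.Quotient.mk I (D''.twistHom s) = Ideal.Quotient.mk I (inl s)
    rw [Ideal.Quotient.mk_eq_mk_iff_sub_mem, hmem]
    simp
  have : g'' = g := hinj (hcomp.trans hg.symm)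
  ext s
  have := congrArg (fun h : S →ₐ[R] TrivSqZeroExt S S => (h s).snd) this
  exact this
end
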